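/- A d-dimensional infinite word w is SURD if and only if it is SURDO, i.e., if and only if every translate w^{(p)} : i ↦ w(i + p) (p ∈ ℕ^d) is SURD. -/
import Mathlib


/-- A unidimensional infinite word is uniformly recurrent if for every length `n`
there is a bound `b` such that every length-`b` factor contains every length-`n` factor. -/
def UniformlyRecurrent {A : Type*} (w : ℕ → A) : Prop :=
  ∀ n : ℕ, ∃ b : ℕ, ∀ p m : ℕ, ∃ k : ℕ,
    m ≤ k ∧ k + n ≤ m + b ∧ ∀ j < n, w (k + j) = w (p + j)

/-- The word along direction `q` with respect to size `s` in the `d`-dimensional word `w`: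
its `ℓ`-th letter is the block of size `s` at position `ℓ • q`. -/
def dirWord {d : ℕ} {A : Type*} (w : (Fin d → ℕ) → A) (q s : Fin d → ℕ) :
    ℕ → ({i : Fin d → ℕ // ∀ j, i j < s j} → A) :=
  fun ℓ i => w (fun j => i.1 j + ℓ * q j)

/-- Uniformly recurrent along all directions. -/
def IsURD {d : ℕ} {A : Type*} (w : (Fin d → ℕ) → A) : Prop :=
  ∀ s q : Fin d → ℕ, Finset.univ.gcd q = 1 →
    ∃ b : ℕ, ∀ m : ℕ, ∃ k : ℕ, m ≤ k ∧ k < m + b ∧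
      dirWord w q s k = dirWord w q s 0

/-- Strongly uniformly recurrent along all directions: the bound depends only on the size. -/
def IsSURD {d : ℕ} {A : Type*} (w : (Fin d → ℕ) → A) : Prop :=
  ∀ s : Fin d → ℕ, ∃ b : ℕ, ∀ q : Fin d → ℕ, Finset.univ.gcd q = 1 →
    ∀ m : ℕ, ∃ k : ℕ, m ≤ k ∧ k < m + b ∧
      dirWord w q s k = dirWord w q s 0

/-- Super strongly uniformly recurrent along all directions from any origin. -/
def IsSSURDO {d : ℕ} {A : Type*} (w : (Fin d → ℕ) → A) : Prop :=
  ∀ s : Fin d → ℕ, ∃ b : ℕ, ∀ q : Fin d → ℕ, Finset.univ.gcd q = 1 →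
    ∀ p : Fin d → ℕ, ∀ m : ℕ, ∃ k : ℕ, m ≤ k ∧ k < m + b ∧
      dirWord (fun i => w (fun j => i j + p j)) q s k =
        dirWord (fun i => w (fun j => i j + p j)) q s 0

/-- Uniform recurrence for `d`-dimensional words: every prefix of size `s` occurs
in every factor of size `(b,…,b)`. -/
def IsUR {d : ℕ} {A : Type*} (w : (Fin d → ℕ) → A) : Prop :=
  ∀ s : Fin d → ℕ, ∃ b : ℕ, ∀ p : Fin d → ℕ, ∃ r : Fin d → ℕ,
    (∀ j, p j ≤ r j ∧ r j + s j ≤ p j + b) ∧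
    ∀ i : Fin d → ℕ, (∀ j, i j < s j) → w (fun j => r j + i j) = w i

theorem stmt_9 {d : ℕ} {A : Type*} [Finite A] (w : (Fin d → ℕ) → A) :
    IsSURD w ↔ ∀ p : Fin d → ℕ, IsSURD (fun i => w (fun j => i j + p j)) := by
  constructor
  · intro h p s
    obtain ⟨b, hb⟩ := h (fun j => s j + p j)
    refine ⟨b, fun q hq m => ?_⟩
    obtain ⟨k, hk1, hk2, hk3⟩ := hb q hq m
    refine ⟨k, hk1, hk2, ?_⟩
    funext i
    have h2 := congrFun hk3 ⟨fun j => i.1 j + p j, fun j => by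
      simpa using Nat.add_lt_add_right (i.2 j) (p j)⟩
    simp only [dirWord] at h2 ⊢
    have e1 : (fun j => i.1 j + k * q j + p j) =
        fun j => (i.1 j + p j) + k * q j := by funext j; ring
    have e2 : (fun j => i.1 j + 0 * q j + p j) =
        fun j => (i.1 j + p j) + 0 * q j := by funext j; ring
    rw [e1, e2]; exact h2
  · intro h
    have h0 := h (fun _ => 0)
    have e : (fun i => w (fun j => i j + (fun _ => 0) j)) = w := by
      funext i; simp
    rwa [e] at h0
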